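/- Let A ∈ SL(2, ℂ) have eigenvalues λ, λ⁻¹ with |λ| > 1, and let A_ℝ ∈ GL(4, ℝ) be the corresponding real matrix. Let B be the block-diagonal linear endomorphism of ℂ¹⁶ ⊕ ∧²(ℂ⁴) acting by a permutation matrix on ℂ¹⁶ and by ∧²A_ℝ on ∧²(ℂ⁴). Then the set of eigenvalues of B consists of |λ|², |λ|⁻², and complex numbers of absolute value 1; in particular B has a real eigenvalue strictly greater than 1. -/

import Mathlib

open Polynomial
open scoped Matrix

noncomputable section

/-- The real `4×4` matrix (indexed by `Fin 2 × Fin 2`) corresponding to a complex `2×2`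
matrix `A` under the standard identification `ℂ² ≅ ℝ⁴`, `z = x + iy ↦ (x, y)`. -/
def realMat (A : Matrix (Fin 2) (Fin 2) ℂ) :
    Matrix (Fin 2 × Fin 2) (Fin 2 × Fin 2) ℝ :=
  Matrix.of fun p q =>
    if p.2 = 0 then (if q.2 = 0 then (A p.1 q.1).re else -(A p.1 q.1).im)
    else (if q.2 = 0 then (A p.1 q.1).im else (A p.1 q.1).re)

/-- Skew-symmetric matrices, a model for `∧²` of the column space. -/
def skewSub (ι R : Type*) [Fintype ι] [CommRing R] :
    Submodule R (Matrix ι ι R) where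
  carrier := {M | Mᵀ = -M}
  add_mem' := by
    intro a b ha hb
    simp only [Set.mem_setOf_eq] at *
    rw [Matrix.transpose_add, ha, hb, neg_add]
  zero_mem' := by simp
  smul_mem' := by
    intro c M hM
    simp only [Set.mem_setOf_eq] at *
    rw [Matrix.transpose_smul, hM, smul_neg]

/-- Conjugation `M ↦ B * M * Bᵀ`, the action induced by `B` on bilinear forms
(equivalently, on `∧²` after restriction to skew-symmetric matrices). -/
def conjMap {ι R : Type*} [Fintype ι] [DecidableEq ι] [CommRing R] (B : Matrix ι ι R) :
    Matrix ι ι R →ₗ[R] Matrix ι ι R where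
  toFun M := B * M * Bᵀ
  map_add' M N := by show B * (M + N) * Bᵀ = B * M * Bᵀ + B * N * Bᵀ; rw [Matrix.mul_add, Matrix.add_mul]
  map_smul' c M := by
    simp [Matrix.mul_smul, Matrix.smul_mul]

lemma conjMap_skew {ι R : Type*} [Fintype ι] [DecidableEq ι] [CommRing R]
    (B : Matrix ι ι R) : ∀ M ∈ skewSub ι R, conjMap B M ∈ skewSub ι R := by
  intro M hM
  have h : Mᵀ = -M := hM
  show (B * M * Bᵀ)ᵀ = -(B * M * Bᵀ)
  rw [Matrix.transpose_mul, Matrix.transpose_mul, Matrix.transpose_transpose, h]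
  simp [Matrix.mul_assoc]

/-- The endomorphism induced by `B` on `∧²` (modelled as skew-symmetric matrices). -/
def wedgeSq {ι R : Type*} [Fintype ι] [DecidableEq ι] [CommRing R] (B : Matrix ι ι R) :
    ↥(skewSub ι R) →ₗ[R] ↥(skewSub ι R) :=
  (conjMap B).restrict (conjMap_skew B)

/-! ### Auxiliary machinery -/

/-- The complex `4×4` matrix `A ⊕ conj A` (interleaved), conjugate over `ℂ` to the
complexification of `realMat A`. -/
def cpx (A : Matrix (Fin 2) (Fin 2) ℂ) : Matrix (Fin 2 × Fin 2) (Fin 2 × Fin 2) ℂ :=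
  Matrix.of fun p q =>
    if p.2 = q.2 then (if p.2 = 0 then A p.1 q.1 else (starRingEnd ℂ) (A p.1 q.1)) else 0

lemma cpx_mul (A B : Matrix (Fin 2) (Fin 2) ℂ) : cpx (A * B) = cpx A * cpx B := by
  ext ⟨i, j⟩ ⟨k, l⟩
  fin_cases j <;> fin_cases l <;>
    simp [cpx, Matrix.mul_apply, Fintype.sum_prod_type, Fin.sum_univ_two, map_add, map_mul]

lemma cpx_one : cpx 1 = 1 := by
  ext ⟨i, j⟩ ⟨k, l⟩
  fin_cases j <;> fin_cases l <;>
    simp [cpx, Matrix.one_apply, Prod.ext_iff, apply_ite (starRingEnd ℂ)]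

/-- The change of basis diagonalizing the complexification of a "real structure" block. -/
def Q0 : Matrix (Fin 2 × Fin 2) (Fin 2 × Fin 2) ℂ :=
  Matrix.of fun p q =>
    if p.1 = q.1 then (if p.2 = 0 then 1 else (if q.2 = 0 then -Complex.I else Complex.I)) else 0

def Q0i : Matrix (Fin 2 × Fin 2) (Fin 2 × Fin 2) ℂ :=
  Matrix.of fun p q =>
    if p.1 = q.1 then (if q.2 = 0 then 1/2 else (if p.2 = 0 then Complex.I/2 else -(Complex.I/2)))
    else 0

lemma Q0_mul_Q0i : Q0 * Q0i = 1 := by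
  ext ⟨i, j⟩ ⟨k, l⟩
  fin_cases i <;> fin_cases j <;> fin_cases k <;> fin_cases l <;>
    simp [Q0, Q0i, Matrix.mul_apply, Fintype.sum_prod_type, Fin.sum_univ_two,
      Matrix.one_apply, Prod.ext_iff, Complex.ext_iff] <;> ring_nf

lemma Q0i_mul_Q0 : Q0i * Q0 = 1 := by
  ext ⟨i, j⟩ ⟨k, l⟩
  fin_cases i <;> fin_cases j <;> fin_cases k <;> fin_cases l <;>
    simp [Q0, Q0i, Matrix.mul_apply, Fintype.sum_prod_type, Fin.sum_univ_two,
      Matrix.one_apply, Prod.ext_iff, Complex.ext_iff] <;> ring_nf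

lemma realMat_mul_Q0 (A : Matrix (Fin 2) (Fin 2) ℂ) :
    (realMat A).map Complex.ofReal * Q0 = Q0 * cpx A := by
  ext ⟨i, j⟩ ⟨k, l⟩
  fin_cases j <;> fin_cases l <;>
    simp [realMat, cpx, Q0, Matrix.mul_apply, Fintype.sum_prod_type, Fin.sum_univ_two,
      Matrix.map_apply, Complex.ext_iff]

lemma cpx_diagonal (d : Fin 2 → ℂ) :
    cpx (Matrix.diagonal d) =
      Matrix.diagonal (fun p => if p.2 = 0 then d p.1 else (starRingEnd ℂ) (d p.1)) := by
  ext ⟨i, j⟩ ⟨k, l⟩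
  fin_cases j <;> fin_cases l <;>
    simp [cpx, Matrix.diagonal_apply, Prod.ext_iff, apply_ite (starRingEnd ℂ)]

section Wedge
variable {ι : Type*} [Fintype ι] [DecidableEq ι]

/-- A skew-symmetric elementary matrix. -/
def skewU (p q : ι) : Matrix ι ι ℂ :=
  Matrix.of fun a b => if a = p ∧ b = q then (1 : ℂ) else if a = q ∧ b = p then -1 else 0

lemma skewU_transpose {p q : ι} (h : p ≠ q) : (skewU p q)ᵀ = -(skewU p q) := by
  ext a b
  simp only [Matrix.transpose_apply, Matrix.neg_apply, skewU, Matrix.of_apply]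
  split_ifs <;> simp_all

variable {Mc Q Qi : Matrix ι ι ℂ} {ev : ι → ℂ}

lemma unconj (hQiQ : Qi * Q = 1) (X : Matrix ι ι ℂ) : Qi * (Q * X * Qᵀ) * Qiᵀ = X := by
  have ht : Qᵀ * Qiᵀ = 1 := by rw [← Matrix.transpose_mul, hQiQ, Matrix.transpose_one]
  simp only [← Matrix.mul_assoc]
  rw [hQiQ, Matrix.one_mul, Matrix.mul_assoc, ht, Matrix.mul_one]

lemma wedge_eigen (hQiQ : Qi * Q = 1)
    (hMQ : Mc * Q = Q * Matrix.diagonal ev) (p q : ι) (hpq : p ≠ q) :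
    Module.End.HasEigenvalue (wedgeSq Mc) (ev p * ev q) := by
  set U := skewU p q with hU
  have hUt := skewU_transpose hpq
  set S := Q * U * Qᵀ with hSdef
  have hSmem : S ∈ skewSub ι ℂ := by
    show Sᵀ = -S
    rw [hSdef, Matrix.transpose_mul, Matrix.transpose_mul, Matrix.transpose_transpose, hUt]
    simp [Matrix.mul_assoc]
    rfl
  have hDUD : Matrix.diagonal ev * U * Matrix.diagonal ev = (ev p * ev q) • U := by
    ext a b
    rw [Matrix.mul_diagonal, Matrix.diagonal_mul]
    simp only [hU, skewU, Matrix.smul_apply, Matrix.of_apply, smul_eq_mul]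
    split_ifs with h1 h2
    · obtain ⟨rfl, rfl⟩ := h1; ring
    · obtain ⟨rfl, rfl⟩ := h2; ring
    · ring
  have hcalc : Mc * S * Mcᵀ = (ev p * ev q) • S := by
    have h1 : Mc * S * Mcᵀ = (Mc * Q) * U * (Mc * Q)ᵀ := by
      rw [Matrix.transpose_mul]
      simp only [hSdef, ← Matrix.mul_assoc]
    rw [h1, hMQ, Matrix.transpose_mul, Matrix.diagonal_transpose]
    calc Q * Matrix.diagonal ev * U * (Matrix.diagonal ev * Qᵀ)
        = Q * (Matrix.diagonal ev * U * Matrix.diagonal ev) * Qᵀ := by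
          simp only [← Matrix.mul_assoc]
      _ = (ev p * ev q) • S := by
          rw [hDUD, hSdef]
          simp [Matrix.mul_smul, Matrix.smul_mul]
  have hSne : S ≠ 0 := by
    intro h0
    have hU0 : U = 0 := by
      have := congrArg (fun X => Qi * X * Qiᵀ) h0
      simpa [hSdef, unconj hQiQ U] using this
    have : (1 : ℂ) = 0 := by
      have := congrFun (congrFun hU0 p) q
      simpa [hU, skewU, hpq] using this
    exact one_ne_zero this
  refine Module.End.hasEigenvalue_of_hasEigenvector (x := ⟨S, hSmem⟩) ⟨?_, ?_⟩
  · rw [Module.End.mem_eigenspace_iff]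
    exact Subtype.ext hcalc
  · simpa [Submodule.mk_eq_zero] using hSne

lemma wedge_eigen_only (hQQi : Q * Qi = 1) (hQiQ : Qi * Q = 1)
    (hMQ : Mc * Q = Q * Matrix.diagonal ev) {μ : ℂ}
    (h : Module.End.HasEigenvalue (wedgeSq Mc) μ) :
    ∃ p q : ι, p ≠ q ∧ μ = ev p * ev q := by
  obtain ⟨v, hv⟩ := h.exists_hasEigenvector
  set S := (v : Matrix ι ι ℂ) with hSdef
  have hSskew : Sᵀ = -S := v.2
  have hSe : Mc * S * Mcᵀ = μ • S := congrArg Subtype.val hv.apply_eq_smul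
  set T := Qi * S * Qiᵀ with hTdef
  have hQt : Qiᵀ * Qᵀ = 1 := by rw [← Matrix.transpose_mul, hQQi, Matrix.transpose_one]
  have hST : S = Q * T * Qᵀ := by
    simp only [hTdef, ← Matrix.mul_assoc]
    rw [hQQi, Matrix.one_mul, Matrix.mul_assoc, hQt, Matrix.mul_one]
  have hTskew : Tᵀ = -T := by
    rw [hTdef, Matrix.transpose_mul, Matrix.transpose_mul, Matrix.transpose_transpose, hSskew]
    simp [Matrix.mul_assoc]
  have hkey : Matrix.diagonal ev * T * Matrix.diagonal ev = μ • T := by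
    have h1 : Mc * S * Mcᵀ = Q * (Matrix.diagonal ev * T * Matrix.diagonal ev) * Qᵀ := by
      have h2 : Mc * S * Mcᵀ = (Mc * Q) * T * (Mc * Q)ᵀ := by
        rw [Matrix.transpose_mul]
        simp only [hST, ← Matrix.mul_assoc]
      rw [h2, hMQ, Matrix.transpose_mul, Matrix.diagonal_transpose]
      simp only [← Matrix.mul_assoc]
    have h2 : Q * (Matrix.diagonal ev * T * Matrix.diagonal ev) * Qᵀ = Q * (μ • T) * Qᵀ := by
      rw [← h1, hSe, hST]
      simp [Matrix.mul_smul, Matrix.smul_mul]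
    have := congrArg (fun X => Qi * X * Qiᵀ) h2
    simpa [unconj hQiQ] using this
  have hTne : T ≠ 0 := by
    intro h0
    apply hv.2
    apply Subtype.ext
    show S = 0
    rw [hST, h0]
    simp
  obtain ⟨a, b, hab⟩ : ∃ a b, T a b ≠ 0 := by
    by_contra hc
    push_neg at hc
    exact hTne (by ext a b; simpa using hc a b)
  have hane : a ≠ b := by
    rintro rfl
    have h3 : T a a = -T a a := by
      have := congrFun (congrFun hTskew a) a
      simpa using this
    have : T a a = 0 := by linear_combination h3 / 2
    exact hab this
  refine ⟨a, b, hane, ?_⟩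
  have h4 := congrFun (congrFun hkey a) b
  rw [Matrix.mul_diagonal, Matrix.diagonal_mul] at h4
  simp only [Matrix.smul_apply, smul_eq_mul] at h4
  have h5 : (ev a * ev b) * T a b = μ * T a b := by linear_combination h4
  exact (mul_right_cancel₀ hab h5).symm

end Wedge

lemma perm_eigen_abs {n : ℕ} (g : Equiv.Perm (Fin n)) {μ : ℂ}
    (h : Module.End.HasEigenvalue (LinearMap.funLeft ℂ ℂ ⇑g) μ) : ‖μ‖ = 1 := by
  obtain ⟨x, hx⟩ := h.exists_hasEigenvector
  have key : ∀ i, x (g i) = μ * x i := by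
    intro i
    have := congrFun hx.apply_eq_smul i
    simpa [LinearMap.funLeft_apply] using this
  have key2 : ∀ m i, x ((g ^ m) i) = μ ^ m * x i := by
    intro m
    induction m with
    | zero => simp
    | succ m ih =>
      intro i
      rw [pow_succ, Equiv.Perm.mul_apply, ih (g i), key i, pow_succ]
      ring
  obtain ⟨i, hi⟩ : ∃ i, x i ≠ 0 := by
    by_contra hc
    push_neg at hc
    exact hx.2 (funext hc)
  have hn1 : (g : Equiv.Perm (Fin n)) ^ orderOf g = 1 := pow_orderOf_eq_one g
  have hmu : μ ^ orderOf g = 1 := by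
    have h1 := key2 (orderOf g) i
    rw [hn1] at h1
    simp only [Equiv.Perm.coe_one, id_eq] at h1
    have h0 : (μ ^ orderOf g - 1) * x i = 0 := by linear_combination -h1
    rcases mul_eq_zero.1 h0 with h | h
    · linear_combination h
    · exact absurd h hi
  have habs : ‖μ‖ ^ orderOf g = 1 := by
    rw [← norm_pow, hmu, norm_one]
  have hnn : orderOf g ≠ 0 := (orderOf_pos g).ne'
  rcases lt_trichotomy ‖μ‖ 1 with h | h | h
  · exfalso
    have := pow_lt_one₀ (norm_nonneg μ) h hnn
    linarith
  · exact h
  · exfalso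
    have := one_lt_pow₀ h hnn
    linarith

lemma prod_eigen_iff {M N : Type*} [AddCommGroup M] [Module ℂ M] [AddCommGroup N] [Module ℂ N]
    (f : M →ₗ[ℂ] M) (g : N →ₗ[ℂ] N) (μ : ℂ) :
    Module.End.HasEigenvalue (f.prodMap g) μ ↔
      Module.End.HasEigenvalue f μ ∨ Module.End.HasEigenvalue g μ := by
  constructor
  · intro h
    obtain ⟨⟨x, y⟩, hxy⟩ := h.exists_hasEigenvector
    have happ := hxy.apply_eq_smul
    rw [Prod.ext_iff] at happ
    simp only [LinearMap.prodMap_apply, Prod.smul_mk] at happ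
    have hne : x ≠ 0 ∨ y ≠ 0 := by
      by_contra hc
      push_neg at hc
      exact hxy.2 (Prod.ext hc.1 hc.2)
    rcases hne with hne | hne
    · exact Or.inl (Module.End.hasEigenvalue_of_hasEigenvector
        ⟨Module.End.mem_eigenspace_iff.2 happ.1, hne⟩)
    · exact Or.inr (Module.End.hasEigenvalue_of_hasEigenvector
        ⟨Module.End.mem_eigenspace_iff.2 happ.2, hne⟩)
  · rintro (h | h) <;> obtain ⟨x, hx⟩ := h.exists_hasEigenvector
    · refine Module.End.hasEigenvalue_of_hasEigenvector (x := (x, 0)) ⟨?_, ?_⟩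
      · rw [Module.End.mem_eigenspace_iff]
        simp [Prod.ext_iff, hx.apply_eq_smul]
      · simp [Prod.ext_iff, hx.2]
    · refine Module.End.hasEigenvalue_of_hasEigenvector (x := (0, x)) ⟨?_, ?_⟩
      · rw [Module.End.mem_eigenspace_iff]
        simp [Prod.ext_iff, hx.apply_eq_smul]
      · simp [Prod.ext_iff, hx.2]

theorem stmt15 (A : Matrix (Fin 2) (Fin 2) ℂ) (lam : ℂ)
    (hdet : A.det = 1)
    (hchar : A.charpoly = (X - C lam) * (X - C lam⁻¹))
    (hlam : 1 < ‖lam‖) (g : Equiv.Perm (Fin 16)) :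
    Module.End.HasEigenvalue
      (LinearMap.prodMap (LinearMap.funLeft ℂ ℂ ⇑g)
        (wedgeSq ((realMat A).map Complex.ofReal))) (((‖lam‖ : ℝ) : ℂ) ^ 2) ∧
    Module.End.HasEigenvalue
      (LinearMap.prodMap (LinearMap.funLeft ℂ ℂ ⇑g)
        (wedgeSq ((realMat A).map Complex.ofReal))) ((((‖lam‖ : ℝ) : ℂ) ^ 2)⁻¹) ∧
    (∀ μ : ℂ, Module.End.HasEigenvalue
        (LinearMap.prodMap (LinearMap.funLeft ℂ ℂ ⇑g)
          (wedgeSq ((realMat A).map Complex.ofReal))) μ →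
      μ = ((‖lam‖ : ℝ) : ℂ) ^ 2 ∨ μ = (((‖lam‖ : ℝ) : ℂ) ^ 2)⁻¹ ∨
        ‖μ‖ = 1) ∧
    (∃ μ : ℝ, 1 < μ ∧ Module.End.HasEigenvalue
      (LinearMap.prodMap (LinearMap.funLeft ℂ ℂ ⇑g)
        (wedgeSq ((realMat A).map Complex.ofReal))) (μ : ℂ)) := by
  have hl0 : lam ≠ 0 := by
    rintro rfl
    simp at hlam
    linarith
  have hinv : lam * lam⁻¹ = 1 := mul_inv_cancel₀ hl0
  have ha0 : (0:ℝ) < ‖lam‖ := by linarith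
  have hlneq : lam ≠ lam⁻¹ := by
    intro h
    have h1 : ‖lam‖ = (‖lam‖)⁻¹ := by
      conv_lhs => rw [h]
      rw [norm_inv]
    have h2 : ‖lam‖ * ‖lam‖ = 1 := by
      nth_rewrite 2 [h1]
      exact mul_inv_cancel₀ ha0.ne'
    nlinarith
  -- trace and determinant
  have htr2 : A 0 0 + A 1 1 = lam + lam⁻¹ := by
    have h1 := Matrix.trace_eq_neg_charpoly_coeff A
    rw [hchar] at h1
    have hcoeff : ((X - C lam) * (X - C lam⁻¹)).coeff 1 = -(lam + lam⁻¹) := by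
      have hexp : (X - C lam) * (X - C lam⁻¹) =
          X ^ 2 - C (lam + lam⁻¹) * X + C (lam * lam⁻¹) := by
        simp only [C_add, C_mul]; ring
      rw [hexp]
      simp [coeff_X_pow]
    rw [← Matrix.trace_fin_two]
    simp only [Fintype.card_fin] at h1
    rw [h1, hcoeff]
    ring
  have hdet2 : A 0 0 * A 1 1 - A 0 1 * A 1 0 = 1 := by
    rw [← Matrix.det_fin_two]; exact hdet
  -- eigenvectors of A
  have hev : ∀ μ : ℂ, (A - μ • 1).det = 0 → ∃ v, v ≠ 0 ∧ A.mulVec v = μ • v := by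
    intro μ hdet0
    obtain ⟨v, hv0, hv⟩ := Matrix.exists_mulVec_eq_zero_iff.2 hdet0
    refine ⟨v, hv0, ?_⟩
    rw [Matrix.sub_mulVec, Matrix.smul_mulVec, Matrix.one_mulVec] at hv
    exact sub_eq_zero.1 hv
  have hd1 : (A - lam • 1).det = 0 := by
    simp only [Matrix.det_fin_two, Matrix.sub_apply, Matrix.smul_apply, Matrix.one_apply,
      smul_eq_mul]
    norm_num
    linear_combination hdet2 - lam * htr2 - hinv
  have hd2 : (A - lam⁻¹ • 1).det = 0 := by
    simp only [Matrix.det_fin_two, Matrix.sub_apply, Matrix.smul_apply, Matrix.one_apply,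
      smul_eq_mul]
    norm_num
    linear_combination hdet2 - lam⁻¹ * htr2 - hinv
  obtain ⟨u, hu0, hAu⟩ := hev lam hd1
  obtain ⟨w, hw0, hAw⟩ := hev lam⁻¹ hd2
  have hu2 : ∀ i, A i 0 * u 0 + A i 1 * u 1 = lam * u i := by
    intro i
    have := congrFun hAu i
    simpa [Matrix.mulVec, dotProduct, Fin.sum_univ_two] using this
  have hw2 : ∀ i, A i 0 * w 0 + A i 1 * w 1 = lam⁻¹ * w i := by
    intro i
    have := congrFun hAw i
    simpa [Matrix.mulVec, dotProduct, Fin.sum_univ_two] using this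
  -- the diagonalizing matrix P for A
  set d : Fin 2 → ℂ := fun i => if i = 0 then lam else lam⁻¹ with hd
  set P : Matrix (Fin 2) (Fin 2) ℂ := Matrix.of fun i k => if k = 0 then u i else w i with hP
  have hdP : P.det ≠ 0 := by
    intro h0
    obtain ⟨c, hc0, hc⟩ := Matrix.exists_mulVec_eq_zero_iff.2 h0
    have hci : ∀ i, u i * c 0 + w i * c 1 = 0 := by
      intro i
      have := congrFun hc i
      simpa [hP, Matrix.mulVec, dotProduct, Fin.sum_univ_two] using this
    have hci2 : ∀ i, lam * u i * c 0 + lam⁻¹ * w i * c 1 = 0 := by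
      intro i
      linear_combination (- c 0) * hu2 i - c 1 * hw2 i + A i 0 * hci 0 + A i 1 * hci 1
    have hc1 : c 1 = 0 := by
      obtain ⟨i, hwi⟩ : ∃ i, w i ≠ 0 := by
        by_contra hcon; push_neg at hcon; exact hw0 (funext hcon)
      have h4 : (lam⁻¹ - lam) * (w i * c 1) = 0 := by linear_combination hci2 i - lam * hci i
      rcases mul_eq_zero.1 h4 with h | h
      · exact absurd (sub_eq_zero.1 h).symm hlneq
      · rcases mul_eq_zero.1 h with h' | h'
        · exact absurd h' hwi
        · exact h'
    have hc0' : c 0 = 0 := by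
      obtain ⟨i, hui⟩ : ∃ i, u i ≠ 0 := by
        by_contra hcon; push_neg at hcon; exact hu0 (funext hcon)
      have h4 : u i * c 0 = 0 := by linear_combination hci i - w i * hc1
      rcases mul_eq_zero.1 h4 with h | h
      · exact absurd h hui
      · exact h
    exact hc0 (funext fun i => by fin_cases i <;> simp [hc0', hc1])
  have hAP : A * P = P * Matrix.diagonal d := by
    ext i k
    fin_cases k <;>
      simp only [Matrix.mul_apply, Fin.sum_univ_two, hP, Matrix.of_apply, Matrix.mul_diagonal,
        hd, Fin.isValue] <;> norm_num
    · linear_combination hu2 i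
    · linear_combination hw2 i
  have hPu : IsUnit P.det := isUnit_iff_ne_zero.2 hdP
  have hPPi : P * P⁻¹ = 1 := Matrix.mul_nonsing_inv P hPu
  have hPiP : P⁻¹ * P = 1 := Matrix.nonsing_inv_mul P hPu
  -- the diagonalizing matrix for the complexified real matrix
  set Q : Matrix (Fin 2 × Fin 2) (Fin 2 × Fin 2) ℂ := Q0 * cpx P with hQ
  set Qi : Matrix (Fin 2 × Fin 2) (Fin 2 × Fin 2) ℂ := cpx P⁻¹ * Q0i with hQi
  have hQQi : Q * Qi = 1 := by
    calc Q0 * cpx P * (cpx P⁻¹ * Q0i) = Q0 * ((cpx P * cpx P⁻¹) * Q0i) := by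
          simp only [Matrix.mul_assoc]
      _ = 1 := by rw [← cpx_mul, hPPi, cpx_one, Matrix.one_mul, Q0_mul_Q0i]
  have hQiQ : Qi * Q = 1 := by
    calc cpx P⁻¹ * Q0i * (Q0 * cpx P) = cpx P⁻¹ * ((Q0i * Q0) * cpx P) := by
          simp only [Matrix.mul_assoc]
      _ = 1 := by rw [Q0i_mul_Q0, Matrix.one_mul, ← cpx_mul, hPiP, cpx_one]
  set ev : Fin 2 × Fin 2 → ℂ :=
    fun p => if p.2 = 0 then d p.1 else (starRingEnd ℂ) (d p.1) with hevd
  set Mc : Matrix (Fin 2 × Fin 2) (Fin 2 × Fin 2) ℂ := (realMat A).map Complex.ofReal with hMc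
  have hMQ : Mc * Q = Q * Matrix.diagonal ev := by
    calc Mc * (Q0 * cpx P) = (Mc * Q0) * cpx P := (Matrix.mul_assoc _ _ _).symm
      _ = (Q0 * cpx A) * cpx P := by rw [hMc, realMat_mul_Q0]
      _ = Q0 * cpx (A * P) := by rw [Matrix.mul_assoc, ← cpx_mul]
      _ = Q0 * (cpx P * cpx (Matrix.diagonal d)) := by rw [hAP, cpx_mul]
      _ = Q * Matrix.diagonal ev := by rw [cpx_diagonal, ← Matrix.mul_assoc, hevd]
  -- the eigenvalues
  have hev00 : ev (0, 0) = lam := by simp [hevd, hd]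
  have hev01 : ev (0, 1) = (starRingEnd ℂ) lam := by simp [hevd, hd]
  have hev10 : ev (1, 0) = lam⁻¹ := by simp [hevd, hd]
  have hev11 : ev (1, 1) = (starRingEnd ℂ) lam⁻¹ := by simp [hevd, hd]
  have hev0 : ev 0 = lam := hev00
  have hev1 : ev 1 = (starRingEnd ℂ) lam⁻¹ := hev11
  have key1 : lam * (starRingEnd ℂ) lam = ((‖lam‖ : ℝ) : ℂ) ^ 2 := by
    rw [Complex.mul_conj, ← Complex.sq_norm]
    push_cast
    ring
  have part1 : Module.End.HasEigenvalue (wedgeSq Mc) (((‖lam‖ : ℝ) : ℂ) ^ 2) := by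
    have h := wedge_eigen hQiQ hMQ (0, 0) (0, 1) (by decide)
    rwa [hev00, hev01, key1] at h
  have part2 : Module.End.HasEigenvalue (wedgeSq Mc) ((((‖lam‖ : ℝ) : ℂ) ^ 2)⁻¹) := by
    have h := wedge_eigen hQiQ hMQ (1, 0) (1, 1) (by decide)
    rwa [hev10, hev11, map_inv₀, ← mul_inv, key1] at h
  refine ⟨(prod_eigen_iff _ _ _).2 (Or.inr part1), (prod_eigen_iff _ _ _).2 (Or.inr part2),
    ?_, ⟨‖lam‖ ^ 2, by nlinarith, ?_⟩⟩
  · intro μ hμ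
    rcases (prod_eigen_iff _ _ _).1 hμ with h | h
    · exact Or.inr (Or.inr (perm_eigen_abs g h))
    · obtain ⟨p, q, hpq, rfl⟩ := wedge_eigen_only hQQi hQiQ hMQ h
      have hconjl0 : (starRingEnd ℂ) lam ≠ 0 := by simpa using hl0
      have key2 : lam⁻¹ * (starRingEnd ℂ) lam⁻¹ = (((‖lam‖ : ℝ) : ℂ) ^ 2)⁻¹ := by
        rw [map_inv₀, ← mul_inv, key1]
      have h1 : ‖lam‖ * (‖lam‖)⁻¹ = 1 := mul_inv_cancel₀ ha0.ne'
      have c1 : ‖lam * lam⁻¹‖ = 1 := by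
        simp [map_mul, map_inv₀, h1]
      have c2 : ‖lam * (starRingEnd ℂ) lam⁻¹‖ = 1 := by
        simp [map_mul, map_inv₀, Complex.norm_conj, h1]
      have c3 : ‖(starRingEnd ℂ) lam * lam⁻¹‖ = 1 := by
        simp [map_mul, map_inv₀, Complex.norm_conj, h1]
      have c4 : ‖(starRingEnd ℂ) lam * (starRingEnd ℂ) lam⁻¹‖ = 1 := by
        simp [map_mul, map_inv₀, Complex.norm_conj, h1]
      obtain ⟨p1, p2⟩ := p
      obtain ⟨q1, q2⟩ := q
      fin_cases p1 <;> fin_cases p2 <;> fin_cases q1 <;> fin_cases q2 <;>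
      first
        | exact absurd rfl hpq
        | exact Or.inl key1
        | exact Or.inl (by rw [mul_comm]; exact key1)
        | exact Or.inr (Or.inl key2)
        | exact Or.inr (Or.inl (by rw [mul_comm]; exact key2))
        | exact Or.inr (Or.inr c1)
        | exact Or.inr (Or.inr c2)
        | exact Or.inr (Or.inr c3)
        | exact Or.inr (Or.inr c4)
        | exact Or.inr (Or.inr (by
            rw [mul_comm]
            first | exact c1 | exact c2 | exact c3 | exact c4))
  · rw [show ((‖lam‖ ^ 2 : ℝ) : ℂ) = ((‖lam‖ : ℝ) : ℂ) ^ 2 by push_cast; ring]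
    exact (prod_eigen_iff _ _ _).2 (Or.inr part1)
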